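/- Let m₀ be an index at which κ_i/T_i attains its maximum over i = 1,…,m. If condition (Z) holds, i.e. ∑_{i=1}^m (n²κ_iT_p² − d_i²(1−κ_i)T_i²)/(nT_pT_i) − 2n < 0, and condition (I) holds, i.e. (κ_{m₀}/T_{m₀})·(−nT_p + ∑_{i=1}^m d_iT_i) < ∑_{i=1}^m d_i + d_{m₀}(1−κ_{m₀}) − 3n, then there exist two solutions (β,α_1,…,α_m,c) and (β′,α′_1,…,α′_m,c′) of the system (∗_c) (with all entries positive, where c and c′ are the respective scaling constants) such that (β′,α′_1,…,α′_m) is not a positive scalar multiple of (β,α_1,…,α_m). -/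

import Mathlib

open Finset

private lemma sqrt_le_aux {X lam : ℝ} (hX : 0 ≤ X) (hl : 0 < lam) :
    Real.sqrt X ≤ (lam^2 + X)/(2*lam) := by
  rw [le_div_iff₀ (by positivity)]
  nlinarith [Real.sq_sqrt hX, Real.sqrt_nonneg X, sq_nonneg (Real.sqrt X - lam)]

set_option maxHeartbeats 2000000 in
/-- Theorem 5.10 (2): under conditions (Z) and (I) there exist two positive solutions of the
system (∗_c) whose metric parts are not proportional. -/
theorem stmt_18 (m : ℕ) (hm : 1 ≤ m) (d : Fin m → ℕ) (hd : ∀ i, 0 < d i)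
    (κ : Fin m → ℝ) (hκ0 : ∀ i, 0 ≤ κ i) (hκ1 : ∀ i, κ i < 1)
    (n : ℝ) (hn : n = 2 * ∑ i, (d i : ℝ) * (1 - κ i))
    (Tp : ℝ) (hTp : 0 < Tp) (T : Fin m → ℝ) (hT : ∀ i, 0 < T i)
    (m₀ : Fin m) (hm₀ : ∀ i, κ i / T i ≤ κ m₀ / T m₀)
    (hZ : ∑ i, (n^2 * κ i * Tp^2 - (d i : ℝ)^2 * (1 - κ i) * (T i)^2) / (n * Tp * T i)
        - 2 * n < 0)
    (hI : (κ m₀ / T m₀) * (-(n * Tp) + ∑ i, (d i : ℝ) * T i)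
        < (∑ i, (d i : ℝ)) + (d m₀ : ℝ) * (1 - κ m₀) - 3 * n) :
    ∃ β β' c c' : ℝ, ∃ α α' : Fin m → ℝ,
      0 < β ∧ 0 < β' ∧ 0 < c ∧ 0 < c' ∧ (∀ i, 0 < α i) ∧ (∀ i, 0 < α' i) ∧
      (∀ i, (1/4) * ((α i / β)^2 * (1 - κ i) + κ i) = c * T i) ∧
      (∑ i, (α i / (2*β) + 1) * ((d i : ℝ) * (1 - κ i)) / n = c * Tp) ∧
      (∀ i, (1/4) * ((α' i / β')^2 * (1 - κ i) + κ i) = c' * T i) ∧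
      (∑ i, (α' i / (2*β') + 1) * ((d i : ℝ) * (1 - κ i)) / n = c' * Tp) ∧
      ¬ ∃ τ : ℝ, 0 < τ ∧ β' = τ * β ∧ ∀ i, α' i = τ * α i := by
  classical
  have hdpos : ∀ i, (0:ℝ) < (d i : ℝ) := fun i => by exact_mod_cast hd i
  have h1κ : ∀ i, (0:ℝ) < 1 - κ i := fun i => by linarith [hκ1 i]
  have hSpos : 0 < ∑ i, (d i:ℝ) * (1 - κ i) :=
    Finset.sum_pos (fun i _ => mul_pos (hdpos i) (h1κ i)) ⟨m₀, Finset.mem_univ m₀⟩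
  have hnpos : 0 < n := by rw [hn]; linarith
  have hn' : n ≠ 0 := ne_of_gt hnpos
  have hhalf : ∑ i, (d i:ℝ)*(1-κ i) = n/2 := by rw [hn]; ring
  -- degenerate case κ m₀ = 0 gives a contradiction with (I)
  rcases (hκ0 m₀).eq_or_lt with h0 | hκm
  · exfalso
    have hallκ : ∀ i, κ i = 0 := by
      intro i
      have h1 : κ i / T i ≤ 0 := by
        have h2 := hm₀ i
        rw [← h0] at h2
        simpa using h2
      have h2 : 0 ≤ κ i / T i := div_nonneg (hκ0 i) (hT i).le
      have h3 : κ i / T i = 0 := le_antisymm h1 h2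
      rcases div_eq_zero_iff.mp h3 with h | h
      · exact h
      · exact absurd h (hT i).ne'
    have hn2 : n = 2 * ∑ i, (d i:ℝ) := by
      rw [hn]; congr 1; exact Finset.sum_congr rfl fun i _ => by rw [hallκ i]; ring
    have hIm : (0:ℝ) < (∑ i, (d i:ℝ)) + (d m₀:ℝ) - 3*n := by
      simpa [hallκ] using hI
    have hdm : (d m₀:ℝ) ≤ ∑ i, (d i:ℝ) :=
      Finset.single_le_sum (fun i _ => (hdpos i).le) (Finset.mem_univ m₀)
    have hS : (0:ℝ) < ∑ i, (d i:ℝ) :=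
      Finset.sum_pos (fun i _ => hdpos i) ⟨m₀, Finset.mem_univ m₀⟩
    rw [hn2] at hIm
    linarith
  -- main case
  set q : ℝ := κ m₀ / T m₀ with hqdef
  have hqpos : 0 < q := div_pos hκm (hT m₀)
  have hqT : q * T m₀ = κ m₀ := div_mul_cancel₀ _ (hT m₀).ne'
  have hκle : ∀ i, κ i ≤ q * T i := by
    intro i
    have h2 := hm₀ i
    calc κ i = (κ i / T i) * T i := (div_mul_cancel₀ _ (hT i).ne').symm
      _ ≤ q * T i := mul_le_mul_of_nonneg_right h2 (hT i).le
  set cm : ℝ := q/4 with hcm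
  have hcmpos : 0 < cm := by rw [hcm]; positivity
  set X : ℝ → Fin m → ℝ := fun c i => (4*c*T i - κ i)/(1 - κ i) with hXdef
  set x : ℝ → Fin m → ℝ := fun c i => Real.sqrt (X c i) with hxdef
  have hnum : ∀ c, cm ≤ c → ∀ i, 0 ≤ 4*c*T i - κ i := by
    intro c hc i
    have h4c : q ≤ 4*c := by rw [hcm] at hc; linarith
    have h5 : q * T i ≤ 4*c*T i := mul_le_mul_of_nonneg_right h4c (hT i).le
    linarith [hκle i]
  have hnum' : ∀ c, cm < c → ∀ i, 0 < 4*c*T i - κ i := by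
    intro c hc i
    have h4c : q < 4*c := by rw [hcm] at hc; linarith
    have h5 : q * T i < 4*c*T i := mul_lt_mul_of_pos_right h4c (hT i)
    linarith [hκle i]
  have hXnn : ∀ c, cm ≤ c → ∀ i, 0 ≤ X c i := by
    intro c hc i; simp only [hXdef]; exact div_nonneg (hnum c hc i) (h1κ i).le
  have hXpos : ∀ c, cm < c → ∀ i, 0 < X c i := by
    intro c hc i; simp only [hXdef]; exact div_pos (hnum' c hc i) (h1κ i)
  have hxsq : ∀ c, cm ≤ c → ∀ i, (x c i)^2 = X c i := by
    intro c hc i; simp only [hxdef]; exact Real.sq_sqrt (hXnn c hc i)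
  have hxpos : ∀ c, cm < c → ∀ i, 0 < x c i := by
    intro c hc i; simp only [hxdef]; exact Real.sqrt_pos.mpr (hXpos c hc i)
  have hxnn : ∀ c i, 0 ≤ x c i := by
    intro c i; simp only [hxdef]; exact Real.sqrt_nonneg _
  have hXmul : ∀ c i, X c i * (1 - κ i) = 4*c*T i - κ i := by
    intro c i; simp only [hXdef]; exact div_mul_cancel₀ _ (h1κ i).ne'
  have contx : ∀ i, Continuous fun c => x c i := by
    intro i; simp only [hxdef, hXdef]
    exact Real.continuous_sqrt.comp
      ((((continuous_const.mul continuous_id).mul continuous_const).sub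
        continuous_const).div_const _)
  set F : ℝ → ℝ := fun c => (∑ i, (d i:ℝ)*(1-κ i)*x c i) - 2*n*c*Tp + n with hFdef
  have contF : Continuous F := by
    simp only [hFdef]
    exact ((continuous_finset_sum _ fun i _ => continuous_const.mul (contx i)).sub
      (((continuous_const.mul continuous_id).mul continuous_const))).add continuous_const
  -- Step D : F cm < 0 from (I)
  have hFcm : F cm < 0 := by
    have hx0 : x cm m₀ = 0 := by
      simp only [hxdef, hXdef]
      have h40 : 4*cm*T m₀ - κ m₀ = 0 := by rw [hcm]; linear_combination hqT
      rw [h40, zero_div, Real.sqrt_zero]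
    have hbnd : ∀ i, (d i:ℝ)*(1-κ i)*x cm i ≤ (d i:ℝ)*(1 - 2*κ i + q*T i)/2 := by
      intro i
      have h1 : x cm i ≤ (1^2 + X cm i)/(2*1) := by
        simp only [hxdef]; exact sqrt_le_aux (hXnn cm le_rfl i) one_pos
      have h2 : (d i:ℝ)*(1-κ i)*x cm i ≤ (d i:ℝ)*(1-κ i)*((1^2 + X cm i)/(2*1)) :=
        mul_le_mul_of_nonneg_left h1 (mul_nonneg (hdpos i).le (h1κ i).le)
      have h3 : (d i:ℝ)*(1-κ i)*((1^2 + X cm i)/(2*1))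
          = (d i:ℝ)*((1-κ i) + X cm i * (1-κ i))/2 := by ring
      rw [h3, hXmul cm i] at h2
      have h4 : (d i:ℝ)*((1-κ i) + (4*cm*T i - κ i))/2
          = (d i:ℝ)*(1 - 2*κ i + q*T i)/2 := by rw [hcm]; ring
      rw [h4] at h2
      exact h2
    have hsplit : ∑ i, (d i:ℝ)*(1-κ i)*x cm i
        = (d m₀:ℝ)*(1-κ m₀)*x cm m₀
          + ∑ i ∈ Finset.univ.erase m₀, (d i:ℝ)*(1-κ i)*x cm i :=
      (Finset.add_sum_erase _ _ (Finset.mem_univ m₀)).symm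
    have hsum1 : ∑ i ∈ Finset.univ.erase m₀, (d i:ℝ)*(1-κ i)*x cm i
        ≤ ∑ i ∈ Finset.univ.erase m₀, (d i:ℝ)*(1 - 2*κ i + q*T i)/2 :=
      Finset.sum_le_sum fun i _ => hbnd i
    have hsum2 : ∑ i ∈ Finset.univ.erase m₀, (d i:ℝ)*(1 - 2*κ i + q*T i)/2
        = (∑ i, (d i:ℝ)*(1 - 2*κ i + q*T i)/2) - (d m₀:ℝ)*(1 - 2*κ m₀ + q*T m₀)/2 :=
      Finset.sum_erase_eq_sub (Finset.mem_univ m₀)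
    have hgm : (d m₀:ℝ)*(1 - 2*κ m₀ + q*T m₀)/2 = (d m₀:ℝ)*(1-κ m₀)/2 := by
      rw [hqT]; ring
    have hSG : ∑ i, (d i:ℝ)*(1 - 2*κ i + q*T i)/2
        = (∑ i, (d i:ℝ))/2 - (∑ i, (d i:ℝ)*κ i) + q*(∑ i, (d i:ℝ)*T i)/2 := by
      have e1 : (∑ i, (d i:ℝ))/2 = ∑ i, (d i:ℝ)/2 := Finset.sum_div _ _ _
      have e2 : q*(∑ i, (d i:ℝ)*T i)/2 = ∑ i, q*((d i:ℝ)*T i)/2 := by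
        rw [Finset.mul_sum, Finset.sum_div]
      rw [e1, e2, ← Finset.sum_sub_distrib, ← Finset.sum_add_distrib]
      exact Finset.sum_congr rfl fun i _ => by ring
    have hdκ : ∑ i, (d i:ℝ)*(1-κ i) = (∑ i, (d i:ℝ)) - ∑ i, (d i:ℝ)*κ i := by
      rw [← Finset.sum_sub_distrib]
      exact Finset.sum_congr rfl fun i _ => by ring
    have hI2 : q * (∑ i, (d i:ℝ)*T i) - q*(n*Tp)
        < (∑ i, (d i:ℝ)) + (d m₀:ℝ)*(1-κ m₀) - 3*n := by linear_combination hI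
    simp only [hFdef]
    have hcm24 : 2*n*cm*Tp = q*(n*Tp)/2 := by rw [hcm]; ring
    rw [hx0] at hsplit
    linarith [hsplit, hsum1, hsum2, hgm, hSG, hdκ, hhalf, hI2, hcm24]
  -- Step A/B : find c* with ∑ dᵢTᵢ/xᵢ(c*) = n Tp
  have hnTp : 0 < n*Tp := mul_pos hnpos hTp
  have hmR : (1:ℝ) ≤ (m:ℝ) := by exact_mod_cast hm
  have hmpos : (0:ℝ) < (m:ℝ) := lt_of_lt_of_le one_pos hmR
  obtain ⟨cs, hcscm, hcs⟩ :
      ∃ cs, cm < cs ∧ ∑ i, (d i:ℝ)*T i / x cs i = n*Tp := by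
    set δ : ℝ := (d m₀:ℝ)*T m₀/(n*Tp) with hδdef
    have hδpos : 0 < δ := div_pos (mul_pos (hdpos m₀) (hT m₀)) hnTp
    set a : ℝ := cm + (1-κ m₀)*δ^2/(4*T m₀) with hadef
    have hacm : cm < a := by
      rw [hadef]
      have h5 : 0 < (1-κ m₀)*δ^2/(4*T m₀) :=
        div_pos (mul_pos (h1κ m₀) (by positivity)) (by linarith [hT m₀])
      linarith
    set hf : ℝ → ℝ := fun c => ∑ i, (d i:ℝ)*T i / x c i with hfdef
    have hXa : X a m₀ = δ^2 := by
      have hTT : (1-κ m₀)*δ^2/(4*T m₀)*(4*T m₀) = (1-κ m₀)*δ^2 :=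
        div_mul_cancel₀ _ (by linarith [hT m₀] : (4*T m₀:ℝ) ≠ 0)
      have h40 : 4*a*T m₀ - κ m₀ = (1-κ m₀)*δ^2 := by
        rw [hadef, hcm]; linear_combination hqT + hTT
      simp only [hXdef]
      rw [h40]
      exact mul_div_cancel_left₀ _ (h1κ m₀).ne'
    have hxa : x a m₀ = δ := by
      simp only [hxdef]; rw [hXa]; exact Real.sqrt_sq hδpos.le
    have hfa : n*Tp ≤ hf a := by
      have h1 : (d m₀:ℝ)*T m₀ / x a m₀ = n*Tp := by
        rw [hxa, hδdef]
        rw [div_div_eq_mul_div, mul_comm, mul_div_assoc,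
          div_self (ne_of_gt (mul_pos (hdpos m₀) (hT m₀))), mul_one]
      calc n*Tp = (d m₀:ℝ)*T m₀ / x a m₀ := h1.symm
        _ ≤ hf a := by
            simp only [hfdef]
            exact Finset.single_le_sum
              (fun i _ => div_nonneg (mul_pos (hdpos i) (hT i)).le (hxnn a i))
              (Finset.mem_univ m₀)
    set b : ℝ := a + ∑ i, (1 + ((m:ℝ)*(d i:ℝ)*T i/(n*Tp))^2)/(4*T i) with hbdef
    have hab : a ≤ b := by
      rw [hbdef]
      have h5 : 0 ≤ ∑ i, (1 + ((m:ℝ)*(d i:ℝ)*T i/(n*Tp))^2)/(4*T i) :=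
        Finset.sum_nonneg fun j _ => div_nonneg (by positivity) (by linarith [hT j])
      linarith
    have hfb : hf b ≤ n*Tp := by
      have hterm : ∀ i, (d i:ℝ)*T i / x b i ≤ n*Tp/(m:ℝ) := by
        intro i
        set w : ℝ := (m:ℝ)*(d i:ℝ)*T i/(n*Tp) with hwdef
        have hw : 0 < w := div_pos (mul_pos (mul_pos hmpos (hdpos i)) (hT i)) hnTp
        have hsumb : (1 + ((m:ℝ)*(d i:ℝ)*T i/(n*Tp))^2)/(4*T i)
            ≤ ∑ j, (1 + ((m:ℝ)*(d j:ℝ)*T j/(n*Tp))^2)/(4*T j) :=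
          Finset.single_le_sum
            (f := fun j => (1 + ((m:ℝ)*(d j:ℝ)*T j/(n*Tp))^2)/(4*T j))
            (fun j _ => div_nonneg (by positivity) (by linarith [hT j]))
            (Finset.mem_univ i)
        rw [← hwdef] at hsumb
        have hb4 : 1 + w^2 ≤ 4*b*T i := by
          have h6 : (1 + w^2)/(4*T i) ≤ b := by
            rw [hbdef]
            have ha0 : 0 < a := lt_trans hcmpos hacm
            linarith
          calc 1 + w^2 = ((1+w^2)/(4*T i))*(4*T i) :=
                (div_mul_cancel₀ _ (by linarith [hT i] : (4*T i:ℝ) ≠ 0)).symm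
            _ ≤ b*(4*T i) := mul_le_mul_of_nonneg_right h6 (by linarith [hT i])
            _ = 4*b*T i := by ring
        have hXb : w^2 ≤ X b i := by
          simp only [hXdef]
          rw [le_div_iff₀ (h1κ i)]
          nlinarith [mul_nonneg (sq_nonneg w) (hκ0 i), hb4, hκ1 i, hκ0 i]
        have hxb : w ≤ x b i := by
          calc w = Real.sqrt (w^2) := (Real.sqrt_sq hw.le).symm
            _ ≤ Real.sqrt (X b i) := Real.sqrt_le_sqrt hXb
            _ = x b i := by simp only [hxdef]
        have hxbp : 0 < x b i := lt_of_lt_of_le hw hxb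
        have h7 : (d i:ℝ)*T i / x b i ≤ (d i:ℝ)*T i / w := by
          rw [div_le_div_iff₀ hxbp hw]
          nlinarith [mul_pos (hdpos i) (hT i)]
        have h8 : (d i:ℝ)*T i / w = n*Tp/(m:ℝ) := by
          rw [div_eq_div_iff hw.ne' hmpos.ne', hwdef]
          field_simp
        rw [h8] at h7
        exact h7
      calc hf b = ∑ i, (d i:ℝ)*T i / x b i := by simp only [hfdef]
        _ ≤ ∑ _i : Fin m, n*Tp/(m:ℝ) := Finset.sum_le_sum fun i _ => hterm i
        _ = (m:ℝ)*(n*Tp/(m:ℝ)) := by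
            rw [Finset.sum_const, Finset.card_univ, Fintype.card_fin, nsmul_eq_mul]
        _ = n*Tp := by field_simp
    have conth : ContinuousOn hf (Set.Icc a b) := by
      simp only [hfdef]
      apply continuousOn_finset_sum
      intro i _
      exact ContinuousOn.div continuousOn_const ((contx i).continuousOn)
        (fun c hc => (hxpos c (lt_of_lt_of_le hacm hc.1) i).ne')
    obtain ⟨cs, hcsmem, hcseq⟩ := intermediate_value_Icc' hab conth ⟨hfb, hfa⟩
    refine ⟨cs, lt_of_lt_of_le hacm hcsmem.1, ?_⟩
    simpa [hfdef] using hcseq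
  -- Step C : F cs > 0 from (Z)
  have hFcs : 0 < F cs := by
    have hcmcs : cm ≤ cs := hcscm.le
    have hsingle : ∀ i, (d i:ℝ)*T i / x cs i ≤ n*Tp := by
      intro i
      rw [← hcs]
      exact Finset.single_le_sum
        (fun j _ => div_nonneg (mul_pos (hdpos j) (hT j)).le (hxnn cs j))
        (Finset.mem_univ i)
    have hxlow : ∀ i, (d i:ℝ)*T i ≤ n*Tp * x cs i := by
      intro i
      have h := hsingle i
      rw [div_le_iff₀ (hxpos cs hcscm i)] at h
      linarith
    have e1 : 2*n*cs*Tp = ∑ i, ((d i:ℝ)*(1-κ i)*x cs i/2 + (d i:ℝ)*κ i/(2*x cs i)) := by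
      have e0 : 2*n*cs*Tp = ∑ i, 2*cs*((d i:ℝ)*T i / x cs i) := by
        rw [← Finset.mul_sum, hcs]; ring
      rw [e0]
      refine Finset.sum_congr rfl fun i _ => ?_
      have hx := hxpos cs hcscm i
      have h2 : (1-κ i)*(x cs i)^2 = 4*cs*T i - κ i := by
        rw [hxsq cs hcmcs i, mul_comm]; exact hXmul cs i
      field_simp
      linear_combination (-(d i:ℝ)) * h2
    have hZ' : ∑ i, (n*Tp*(κ i)/T i - (d i:ℝ)^2*(1-κ i)*T i/(n*Tp)) < 2*n := by
      have e : ∀ i, (n^2*κ i*Tp^2 - (d i:ℝ)^2*(1-κ i)*T i^2)/(n*Tp*T i)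
          = n*Tp*(κ i)/T i - (d i:ℝ)^2*(1-κ i)*T i/(n*Tp) := by
        intro i
        field_simp [hnpos.ne', hTp.ne', (hT i).ne']
      have h9 := hZ
      rw [Finset.sum_congr rfl (fun i _ => e i)] at h9
      linarith
    have plow : ∀ i, (d i:ℝ)^2*(1-κ i)*T i/(2*(n*Tp)) - (n*Tp*(κ i)/T i)/2
        ≤ (d i:ℝ)*(1-κ i)*x cs i
          - ((d i:ℝ)*(1-κ i)*x cs i/2 + (d i:ℝ)*κ i/(2*x cs i)) := by
      intro i
      have hx := hxpos cs hcscm i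
      have hlow := hxlow i
      have pA : (d i:ℝ)^2*(1-κ i)*T i/(2*(n*Tp)) ≤ (d i:ℝ)*(1-κ i)*x cs i/2 := by
        rw [div_le_iff₀ (by positivity : (0:ℝ) < 2*(n*Tp))]
        nlinarith [mul_le_mul_of_nonneg_left hlow (mul_nonneg (hdpos i).le (h1κ i).le)]
      have pB : (d i:ℝ)*κ i/(2*x cs i) ≤ (n*Tp*(κ i)/T i)/2 := by
        rw [div_div, div_le_div_iff₀ (by positivity : (0:ℝ) < 2*x cs i)
          (mul_pos (hT i) two_pos)]
        nlinarith [mul_le_mul_of_nonneg_left hlow (hκ0 i)]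
      linarith
    have hsum : ∑ i, ((d i:ℝ)^2*(1-κ i)*T i/(2*(n*Tp)) - (n*Tp*(κ i)/T i)/2)
        ≤ ∑ i, ((d i:ℝ)*(1-κ i)*x cs i
          - ((d i:ℝ)*(1-κ i)*x cs i/2 + (d i:ℝ)*κ i/(2*x cs i))) :=
      Finset.sum_le_sum fun i _ => plow i
    have hBZ : ∑ i, ((d i:ℝ)^2*(1-κ i)*T i/(2*(n*Tp)) - (n*Tp*(κ i)/T i)/2)
        = (-(1/2)) * ∑ i, (n*Tp*(κ i)/T i - (d i:ℝ)^2*(1-κ i)*T i/(n*Tp)) := by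
      rw [Finset.mul_sum]
      exact Finset.sum_congr rfl fun i _ => by ring
    have hsplit2 : ∑ i, ((d i:ℝ)*(1-κ i)*x cs i
          - ((d i:ℝ)*(1-κ i)*x cs i/2 + (d i:ℝ)*κ i/(2*x cs i)))
        = (∑ i, (d i:ℝ)*(1-κ i)*x cs i)
          - ∑ i, ((d i:ℝ)*(1-κ i)*x cs i/2 + (d i:ℝ)*κ i/(2*x cs i)) :=
      Finset.sum_sub_distrib _ _
    simp only [hFdef]
    linarith [hsum, hBZ, hsplit2, e1, hZ']
  -- Step E : a point b' > cs with F b' < 0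
  obtain ⟨b', hcsb', hFb'⟩ : ∃ b', cs < b' ∧ F b' < 0 := by
    set lam : ℝ := (∑ i, (d i:ℝ)*T i)/(n*Tp) + 1 with hlamdef
    have hdT : 0 < ∑ i, (d i:ℝ)*T i :=
      Finset.sum_pos (fun i _ => mul_pos (hdpos i) (hT i)) ⟨m₀, Finset.mem_univ m₀⟩
    have hlam : 0 < lam := by
      rw [hlamdef]
      have : 0 ≤ (∑ i, (d i:ℝ)*T i)/(n*Tp) := div_nonneg hdT.le hnTp.le
      linarith
    set A : ℝ := ∑ i, ((d i:ℝ)*(1-κ i)*lam^2 - (d i:ℝ)*κ i)/(2*lam) with hAdef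
    set B : ℝ := 2*(∑ i, (d i:ℝ)*T i)/lam with hBdef
    have hB : B < 2*n*Tp := by
      rw [hBdef, div_lt_iff₀ hlam, hlamdef]
      have h9 : (∑ i, (d i:ℝ)*T i)/(n*Tp)*(n*Tp) = ∑ i, (d i:ℝ)*T i :=
        div_mul_cancel₀ _ hnTp.ne'
      nlinarith [hdT, hnTp, h9]
    set gg : ℝ := 2*n*Tp - B with hγdef
    have hγ : 0 < gg := by rw [hγdef]; linarith
    refine ⟨max cs ((A+n)/gg) + 1, ?_, ?_⟩
    · have := le_max_left cs ((A+n)/gg); linarith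
    set b' : ℝ := max cs ((A+n)/gg) + 1 with hb'def
    have hcsb' : cs < b' := by
      rw [hb'def]; have := le_max_left cs ((A+n)/gg); linarith
    have hcmb' : cm ≤ b' := le_trans hcscm.le hcsb'.le
    have hup : ∀ i, (d i:ℝ)*(1-κ i)*x b' i
        ≤ ((d i:ℝ)*(1-κ i)*lam^2 - (d i:ℝ)*κ i)/(2*lam) + (2*(d i:ℝ)*T i/lam)*b' := by
      intro i
      have h1 : x b' i ≤ (lam^2 + X b' i)/(2*lam) := by
        simp only [hxdef]; exact sqrt_le_aux (hXnn b' hcmb' i) hlam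
      have h2 : (d i:ℝ)*(1-κ i)*x b' i ≤ (d i:ℝ)*(1-κ i)*((lam^2 + X b' i)/(2*lam)) :=
        mul_le_mul_of_nonneg_left h1 (mul_nonneg (hdpos i).le (h1κ i).le)
      have h3 : (d i:ℝ)*(1-κ i)*((lam^2 + X b' i)/(2*lam))
          = ((d i:ℝ)*(1-κ i)*lam^2 + (d i:ℝ)*(X b' i*(1-κ i)))/(2*lam) := by ring
      rw [h3, hXmul b' i] at h2
      calc (d i:ℝ)*(1-κ i)*x b' i
          ≤ ((d i:ℝ)*(1-κ i)*lam^2 + (d i:ℝ)*(4*b'*T i - κ i))/(2*lam) := h2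
        _ = ((d i:ℝ)*(1-κ i)*lam^2 - (d i:ℝ)*κ i)/(2*lam) + (2*(d i:ℝ)*T i/lam)*b' := by
            field_simp
            ring
    have hsum : ∑ i, (d i:ℝ)*(1-κ i)*x b' i ≤ A + B*b' := by
      calc ∑ i, (d i:ℝ)*(1-κ i)*x b' i
          ≤ ∑ i, (((d i:ℝ)*(1-κ i)*lam^2 - (d i:ℝ)*κ i)/(2*lam)
              + (2*(d i:ℝ)*T i/lam)*b') :=
            Finset.sum_le_sum fun i _ => hup i
        _ = A + B*b' := by
            rw [Finset.sum_add_distrib, hAdef, hBdef]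
            congr 1
            rw [Finset.mul_sum, Finset.sum_div, ← Finset.sum_mul]
            congr 1
            exact Finset.sum_congr rfl fun i _ => by ring
    have hb'big : (A+n)/gg < b' := by
      rw [hb'def]; have := le_max_right cs ((A+n)/gg); linarith
    rw [div_lt_iff₀ hγ] at hb'big
    rw [hγdef] at hb'big
    simp only [hFdef]
    nlinarith [hsum, hb'big]
  -- two roots by IVT
  obtain ⟨c₁, hc₁mem, hF1⟩ := intermediate_value_Icc (le_of_lt hcscm) contF.continuousOn
    (Set.mem_Icc.mpr ⟨hFcm.le, hFcs.le⟩)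
  obtain ⟨c₂, hc₂mem, hF2⟩ := intermediate_value_Icc' (le_of_lt hcsb') contF.continuousOn
    (Set.mem_Icc.mpr ⟨hFb'.le, hFcs.le⟩)
  have hc1cm : cm < c₁ := by
    rcases eq_or_lt_of_le hc₁mem.1 with h | h
    · exfalso; rw [h] at hFcm; rw [hF1] at hFcm; exact lt_irrefl 0 hFcm
    · exact h
  have hc1cs : c₁ < cs := by
    rcases eq_or_lt_of_le hc₁mem.2 with h | h
    · exfalso; rw [h] at hF1; rw [hF1] at hFcs; exact lt_irrefl 0 hFcs
    · exact h
  have hc2cs : cs < c₂ := by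
    rcases eq_or_lt_of_le hc₂mem.1 with h | h
    · exfalso; rw [← h] at hF2; rw [hF2] at hFcs; exact lt_irrefl 0 hFcs
    · exact h
  have hc2cm : cm < c₂ := lt_trans hcscm hc2cs
  -- assemble
  have heq1 : ∀ c, cm < c → ∀ i,
      (1/4) * ((x c i / 1)^2 * (1 - κ i) + κ i) = c * T i := by
    intro c hc i
    rw [div_one, hxsq c hc.le i]
    linear_combination (1/4) * hXmul c i
  have heq2 : ∀ c, cm < c → F c = 0 →
      ∑ i, (x c i / (2*1) + 1) * ((d i : ℝ) * (1 - κ i)) / n = c * Tp := by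
    intro c hc hFc
    have hS1 : ∑ i, (d i:ℝ)*(1-κ i)*x c i = 2*n*c*Tp - n := by
      simp only [hFdef] at hFc; linarith
    have e : ∑ i, (x c i / (2*1) + 1) * ((d i : ℝ) * (1 - κ i)) / n
        = ((∑ i, (d i:ℝ)*(1-κ i)*x c i)/2 + ∑ i, (d i:ℝ)*(1-κ i))/n := by
      calc ∑ i, (x c i / (2*1) + 1) * ((d i : ℝ) * (1 - κ i)) / n
          = ∑ i, ((d i:ℝ)*(1-κ i)*x c i/2 + (d i:ℝ)*(1-κ i))/n :=
            Finset.sum_congr rfl fun i _ => by ring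
        _ = (∑ i, ((d i:ℝ)*(1-κ i)*x c i/2 + (d i:ℝ)*(1-κ i)))/n := by
            rw [Finset.sum_div]
        _ = ((∑ i, (d i:ℝ)*(1-κ i)*x c i)/2 + ∑ i, (d i:ℝ)*(1-κ i))/n := by
            rw [Finset.sum_add_distrib, Finset.sum_div]
    rw [e, hS1, hhalf]
    field_simp
    ring
  refine ⟨1, 1, c₁, c₂, fun i => x c₁ i, fun i => x c₂ i, one_pos, one_pos,
    lt_trans hcmpos hc1cm, lt_trans hcmpos hc2cm,
    fun i => hxpos c₁ hc1cm i, fun i => hxpos c₂ hc2cm i,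
    heq1 c₁ hc1cm, heq2 c₁ hc1cm hF1, heq1 c₂ hc2cm, heq2 c₂ hc2cm hF2, ?_⟩
  rintro ⟨τ, hτ, hβ, hαp⟩
  have hτ1 : τ = 1 := by rw [mul_one] at hβ; exact hβ.symm
  have hxx : x c₂ m₀ = x c₁ m₀ := by
    have h5 := hαp m₀
    simp only [hτ1, one_mul] at h5
    exact h5
  have hXX : X c₂ m₀ = X c₁ m₀ := by
    rw [← hxsq c₂ hc2cm.le m₀, ← hxsq c₁ hc1cm.le m₀, hxx]
  have h42 : 4*c₂*T m₀ - κ m₀ = 4*c₁*T m₀ - κ m₀ := by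
    rw [← hXmul c₂ m₀, ← hXmul c₁ m₀, hXX]
  have : c₁ < c₂ := lt_trans hc1cs hc2cs
  nlinarith [hT m₀]
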